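/- Let c be a proper edge coloring of a graph G and let v be a vertex at which color a appears but color b does not appear (a ≠ b). Then the connected component of v in the subgraph induced by edges colored a or b is a path with endpoint v. -/

import Mathlib

open Finset SimpleGraph

def IsProperEdgeColoring {V : Type*} {α : Type*} (G : SimpleGraph V) (c : Sym2 V → α) : Prop :=
  ∀ v w₁ w₂, G.Adj v w₁ → G.Adj v w₂ → w₁ ≠ w₂ → c s(v, w₁) ≠ c s(v, w₂)

/-- The spanning subgraph of `G` consisting of the edges colored `a` or `b`. -/
def twoColorSubgraph {V : Type*} (G : SimpleGraph V) (c : Sym2 V → ℕ) (a b : ℕ) :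
    SimpleGraph V where
  Adj x y := G.Adj x y ∧ (c s(x, y) = a ∨ c s(x, y) = b)
  symm := ⟨by
    intro x y ⟨h, h'⟩
    exact ⟨h.symm, by rwa [Sym2.eq_swap]⟩⟩
  loopless := ⟨fun x ⟨h, _⟩ => G.loopless.irrefl x h⟩

theorem stmt_7 {V : Type*} [Fintype V] [DecidableEq V] (G : SimpleGraph V)
    [DecidableRel G.Adj] (c : Sym2 V → ℕ) (hc : IsProperEdgeColoring G c)
    (a b : ℕ) (hab : a ≠ b) (v : V)
    (ha : ∃ w, G.Adj v w ∧ c s(v, w) = a)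
    (hb : ∀ w, G.Adj v w → c s(v, w) ≠ b) :
    ∃ (u : V) (P : (twoColorSubgraph G c a b).Walk v u), P.IsPath ∧
      (∀ x, x ∈ P.support ↔ (twoColorSubgraph G c a b).Reachable v x) ∧
      (∀ e ∈ (twoColorSubgraph G c a b).edgeSet,
        (∃ x ∈ e, (twoColorSubgraph G c a b).Reachable v x) → e ∈ P.edges) := by
  set H := twoColorSubgraph G c a b with hH
  have hHadj : ∀ x y, H.Adj x y ↔ (G.Adj x y ∧ (c s(x, y) = a ∨ c s(x, y) = b)) := by
    intro x y; rfl
  -- every vertex has at most two neighbors in H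
  have hdeg : ∀ x y z w', H.Adj x y → H.Adj x z → H.Adj x w' →
      y = z ∨ y = w' ∨ z = w' := by
    intro x y z w' h1 h2 h3
    by_contra h
    push_neg at h
    obtain ⟨hyz, hyw, hzw⟩ := h
    have c1 := hc x y z h1.1 h2.1 hyz
    have c2 := hc x y w' h1.1 h3.1 hyw
    have c3 := hc x z w' h2.1 h3.1 hzw
    rcases h1.2 with e1 | e1 <;> rcases h2.2 with e2 | e2 <;>
      rcases h3.2 with e3 | e3 <;> simp_all
  -- v has at most one neighbor in H
  have hdegv : ∀ y z, H.Adj v y → H.Adj v z → y = z := by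
    intro y z h1 h2
    by_contra h
    have hne := hc v y z h1.1 h2.1 h
    have b1 := hb y h1.1
    have b2 := hb z h2.1
    rcases h1.2 with e1 | e1 <;> rcases h2.2 with e2 | e2 <;> simp_all
  obtain ⟨w, hw, hwa⟩ := ha
  have hvw : H.Adj v w := ⟨hw, Or.inl hwa⟩
  -- finishing step: if the invariant holds and the end is saturated, we get a closed path
  have finish : ∀ (u : V) (P : H.Walk v u), P.IsPath →
      (∀ x ∈ P.support, x ≠ u → ∀ y, H.Adj x y → s(x, y) ∈ P.edges) →
      (∀ y, H.Adj u y → s(u, y) ∈ P.edges) →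
      ∃ (u' : V) (Q : H.Walk v u'), Q.IsPath ∧
        ∀ x ∈ Q.support, ∀ y, H.Adj x y → s(x, y) ∈ Q.edges := by
    intro u P hP hinv hsat
    refine ⟨u, P, hP, fun x hx y hxy => ?_⟩
    by_cases hxu : x = u
    · subst hxu; exact hsat y hxy
    · exact hinv x hx hxu y hxy
  -- main construction by induction on the number of vertices not yet visited
  have key : ∀ n (u : V) (P : H.Walk v u), P.IsPath → 0 < P.length →
      (∀ x ∈ P.support, x ≠ u → ∀ y, H.Adj x y → s(x, y) ∈ P.edges) →
      Fintype.card V - P.support.length ≤ n →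
      ∃ (u' : V) (Q : H.Walk v u'), Q.IsPath ∧
        ∀ x ∈ Q.support, ∀ y, H.Adj x y → s(x, y) ∈ Q.edges := by
    intro n
    induction n with
    | zero =>
      intro u P hP hlen hinv hcard
      by_cases hsat : ∀ y, H.Adj u y → s(u, y) ∈ P.edges
      · exact finish u P hP hinv hsat
      · push_neg at hsat
        obtain ⟨y, huy, hey⟩ := hsat
        have hynot : y ∉ P.support := by
          intro hy
          have hyu : y ≠ u := fun h => H.loopless.irrefl u (h ▸ huy)
          have := hinv y hy hyu u huy.symm
          rw [Sym2.eq_swap] at this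
          exact hey this
        have hP' : (P.concat huy).IsPath := by
          rw [SimpleGraph.Walk.isPath_def] at hP ⊢
          simp [List.concat_eq_append, List.nodup_append, hP, hynot]
          intro x hx h; exact hynot (h ▸ hx)
        have hlen' : (P.concat huy).support.length ≤ Fintype.card V := by
          exact ((SimpleGraph.Walk.isPath_def _).mp hP').length_le_card
        simp only [SimpleGraph.Walk.support_concat, List.concat_eq_append,
          List.length_append, List.length_singleton] at hlen'
        omega
    | succ n ih =>
      intro u P hP hlen hinv hcard
      by_cases hsat : ∀ y, H.Adj u y → s(u, y) ∈ P.edges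
      · exact finish u P hP hinv hsat
      · push_neg at hsat
        obtain ⟨y, huy, hey⟩ := hsat
        have hynot : y ∉ P.support := by
          intro hy
          have hyu : y ≠ u := fun h => H.loopless.irrefl u (h ▸ huy)
          have := hinv y hy hyu u huy.symm
          rw [Sym2.eq_swap] at this
          exact hey this
        have hP' : (P.concat huy).IsPath := by
          rw [SimpleGraph.Walk.isPath_def] at hP ⊢
          simp [List.concat_eq_append, List.nodup_append, hP, hynot]
          intro x hx h; exact hynot (h ▸ hx)
        -- the predecessor of u on P
        have hvu : v ≠ u := by
          intro h
          subst h
          rw [SimpleGraph.Walk.isPath_iff_eq_nil] at hP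
          subst hP
          simp at hlen
        have huv : u ≠ v := hvu.symm
        obtain ⟨p, hup, q, hq⟩ := SimpleGraph.Walk.exists_eq_cons_of_ne huv P.reverse
        have hupe : s(u, p) ∈ P.edges := by
          have : s(u, p) ∈ P.reverse.edges := by
            rw [hq]; simp
          rwa [SimpleGraph.Walk.edges_reverse, List.mem_reverse] at this
        have hpy : p ≠ y := by
          intro h; subst h; exact hey hupe
        -- new invariant
        have hinv' : ∀ x ∈ (P.concat huy).support, x ≠ y → ∀ z, H.Adj x z →
            s(x, z) ∈ (P.concat huy).edges := by
          intro x hx hxy z hxz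
          rw [SimpleGraph.Walk.support_concat,
            List.mem_append] at hx
          simp only [SimpleGraph.Walk.edges_concat, List.concat_eq_append,
            List.mem_append, List.mem_singleton]
          rcases hx with hx | hx
          · by_cases hxu : x = u
            · subst hxu
              rcases hdeg x p y z hup huy hxz with h | h | h
              · exact absurd h hpy
              · subst h; exact Or.inl hupe
              · subst h; exact Or.inr rfl
            · exact Or.inl (hinv x hx hxu z hxz)
          · simp at hx; exact absurd hx hxy
        have hcard' : Fintype.card V - (P.concat huy).support.length ≤ n := by
          simp only [SimpleGraph.Walk.support_concat, List.concat_eq_append,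
            List.length_append, List.length_singleton]
          omega
        exact ih y (P.concat huy) hP' (by simp [SimpleGraph.Walk.length_concat]) hinv' hcard'
  -- apply the construction to the path v - w
  have hP0 : (SimpleGraph.Walk.cons hvw SimpleGraph.Walk.nil).IsPath := by
    simp [SimpleGraph.Walk.isPath_def, (H.ne_of_adj hvw)]
  obtain ⟨u, P, hP, hclosed⟩ := key (Fintype.card V) w
    (SimpleGraph.Walk.cons hvw SimpleGraph.Walk.nil) hP0 (by simp)
    (by
      intro x hx hxw z hxz
      simp only [SimpleGraph.Walk.support_cons, SimpleGraph.Walk.support_nil,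
        List.mem_cons, List.mem_singleton, List.not_mem_nil, or_false] at hx
      rcases hx with hx | hx
      · subst hx
        have := hdegv w z hvw hxz
        subst this
        simp
      · exact absurd hx hxw)
    (by omega)
  -- support is closed under adjacency
  have hsupp : ∀ x y (W : H.Walk x y), x ∈ P.support → y ∈ P.support := by
    intro x y W
    induction W with
    | nil => exact id
    | cons h W ih =>
      intro hx
      exact ih (P.snd_mem_support_of_mem_edges (hclosed _ hx _ h))
  refine ⟨u, P, hP, ?_, ?_⟩
  · intro x
    constructor
    · intro hx
      exact ⟨P.takeUntil x hx⟩
    · rintro ⟨W⟩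
      exact hsupp v x W P.start_mem_support
  · intro e he hex
    induction e with
    | _ p' q' =>
      obtain ⟨x, hxe, hreach⟩ := hex
      have hadj : H.Adj p' q' := he
      have hxs : x ∈ P.support := by
        obtain ⟨W⟩ := hreach
        exact hsupp v x W P.start_mem_support
      rw [Sym2.mem_iff] at hxe
      rcases hxe with h | h
      · subst h; exact hclosed x hxs q' hadj
      · subst h
        rw [Sym2.eq_swap]
        exact hclosed x hxs p' hadj.symm
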